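/- arXiv:1703.03265 — 2 statements merged into one kernel-verified Lean document; each statement's English description precedes it below -/
import Mathlib

section
/- Let d ≥ 2, let |φ_d⟩ = (1/√d) Σ_{i=0}^{d−1} |i⟩ be the maximally coherent state, and for 0 < p ≤ 1 let ρ_m = p|φ_d⟩⟨φ_d| + ((1−p)/d) I_d be the maximally coherent mixed state. Then the modified trace distance measure of coherence of ρ_m equals p: inf_{λ ≥ 0, δ diagonal density matrix} ‖ρ_m − λδ‖_tr = p. -/
open Matrix
open scoped ComplexOrder

/-- The trace norm of a matrix `A`: `‖A‖_tr = Tr √(AᴴA)`. -/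
noncomputable def traceNorm {d : ℕ} (A : Matrix (Fin d) (Fin d) ℂ) : ℝ :=
  (((Matrix.posSemidef_conjTranspose_mul_self A).1.eigenvectorUnitary.1 *
    diagonal (((↑) : ℝ → ℂ) ∘ (√·) ∘ (Matrix.posSemidef_conjTranspose_mul_self A).1.eigenvalues) *
    (star (Matrix.posSemidef_conjTranspose_mul_self A).1.eigenvectorUnitary :
      Matrix (Fin d) (Fin d) ℂ)).trace).re

open scoped MatrixOrder in
lemma traceNorm_eq_of_sq {d : ℕ} {A S : Matrix (Fin d) (Fin d) ℂ} (hS : S.PosSemidef)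
    (h : S * S = Aᴴ * A) : traceNorm A = S.trace.re := by
  have hA := Matrix.posSemidef_conjTranspose_mul_self A
  have h1 : CFC.sqrt (Aᴴ * A) = S := CFC.sqrt_unique h (Matrix.nonneg_iff_posSemidef.mpr hS)
  rw [CFC.sqrt_eq_real_sqrt _ (Matrix.nonneg_iff_posSemidef.mpr hA), cfcₙ_eq_cfc,
    hA.1.cfc_eq] at h1
  rw [traceNorm, ← h1, Matrix.IsHermitian.cfc, Unitary.conjStarAlgAut_apply]
  rfl

/-- The maximally coherent state `|φ_d⟩ = (1/√d) Σ_i |i⟩`. -/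
noncomputable def phi (d : ℕ) : Fin d → ℂ :=
  fun _ => ((Real.sqrt d : ℂ))⁻¹

/-- The maximally coherent mixed state `ρ_m = p|φ_d⟩⟨φ_d| + ((1−p)/d) I_d`. -/
noncomputable def mcms (d : ℕ) (p : ℝ) : Matrix (Fin d) (Fin d) ℂ :=
  p • Matrix.vecMulVec (phi d) (star (phi d)) + ((1 - p) / d : ℝ) • 1

lemma traceNorm_eq_sum_abs {d : ℕ} {M : Matrix (Fin d) (Fin d) ℂ} (hM : M.IsHermitian) :
    traceNorm M = ∑ i, |hM.eigenvalues i| := by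
  set U : Matrix (Fin d) (Fin d) ℂ := (hM.eigenvectorUnitary : Matrix (Fin d) (Fin d) ℂ) with hUdef
  have hU2 : star U * U = 1 := Matrix.mem_unitaryGroup_iff'.mp hM.eigenvectorUnitary.2
  set e : Fin d → ℝ := hM.eigenvalues with he
  have key : ∀ v w : Fin d → ℂ,
      (U * diagonal v * star U) * (U * diagonal w * star U) = U * diagonal (v * w) * star U := by
    intro v w
    calc (U * diagonal v * star U) * (U * diagonal w * star U)
        = U * diagonal v * (star U * U) * (diagonal w * star U) := by
          simp only [Matrix.mul_assoc]
      _ = U * (diagonal v * diagonal w) * star U := by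
          rw [hU2, Matrix.mul_one]; simp only [Matrix.mul_assoc]
      _ = U * diagonal (v * w) * star U := by rw [diagonal_mul_diagonal]; rfl
  set S : Matrix (Fin d) (Fin d) ℂ :=
    U * diagonal (fun i => ((|e i| : ℝ) : ℂ)) * star U with hS
  have hSpsd : S.PosSemidef := by
    have h2 : S = (diagonal (fun i => ((Real.sqrt |e i| : ℝ) : ℂ)) * star U)ᴴ *
        (diagonal (fun i => ((Real.sqrt |e i| : ℝ) : ℂ)) * star U) := by
      rw [conjTranspose_mul, diagonal_conjTranspose]
      simp only [← Matrix.star_eq_conjTranspose, star_star]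
      have : U * diagonal (star fun i => ((Real.sqrt |e i| : ℝ) : ℂ)) *
          (diagonal (fun i => ((Real.sqrt |e i| : ℝ) : ℂ)) * star U)
          = U * ((diagonal (star fun i => ((Real.sqrt |e i| : ℝ) : ℂ))) *
            (diagonal (fun i => ((Real.sqrt |e i| : ℝ) : ℂ)))) * star U := by
        simp only [Matrix.mul_assoc]
      have hdd : diagonal (star fun i => ((Real.sqrt |e i| : ℝ) : ℂ)) *
          diagonal (fun i => ((Real.sqrt |e i| : ℝ) : ℂ)) = diagonal (fun i => ((|e i| : ℝ) : ℂ)) := by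
        ext i j
        by_cases h : i = j <;>
          simp [diagonal_apply, h, Complex.conj_ofReal, ← Complex.ofReal_mul,
            Real.mul_self_sqrt (abs_nonneg (e j))]
      rw [this, hdd, hS]
    rw [h2]
    exact posSemidef_conjTranspose_mul_self _
  have hsq : S ^ 2 = Mᴴ * M := by
    have hMM : Mᴴ * M = M * M := by rw [hM.eq]
    rw [pow_two, hMM]
    conv_rhs => rw [hM.spectral_theorem, Unitary.conjStarAlgAut_apply]
    rw [hS, ← hUdef, key, key]
    have hfun : ((fun i => ((|e i| : ℝ) : ℂ)) * fun i => ((|e i| : ℝ) : ℂ))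
        = (RCLike.ofReal ∘ hM.eigenvalues) * (RCLike.ofReal ∘ hM.eigenvalues) := by
      funext i
      simp only [Pi.mul_apply, Function.comp_apply, ← Complex.ofReal_mul, abs_mul_abs_self]
      rw [← he]
      norm_cast
    rw [hfun]
  have hSeq : traceNorm M = S.trace.re :=
    traceNorm_eq_of_sq hSpsd (by rw [← pow_two]; exact hsq)
  rw [hSeq, hS]
  rw [Matrix.trace_mul_comm, ← Matrix.mul_assoc, hU2, Matrix.one_mul, trace_diagonal]
  push_cast
  simp

lemma diag_entry_bound {d : ℕ} {B : Matrix (Fin d) (Fin d) ℂ}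
    (h1 : (1 - B).PosSemidef) (h2 : (1 + B).PosSemidef)
    (x : Fin d → ℂ) (hx : dotProduct (star x) x = 1) :
    |(dotProduct (star x) (B *ᵥ x)).re| ≤ 1 := by
  have e1 := h1.dotProduct_mulVec_nonneg x
  have e2 := h2.dotProduct_mulVec_nonneg x
  rw [Matrix.sub_mulVec, dotProduct_sub, Matrix.one_mulVec, hx] at e1
  rw [Matrix.add_mulVec, dotProduct_add, Matrix.one_mulVec, hx] at e2
  have r1 : 0 ≤ (1 - dotProduct (star x) (B *ᵥ x)).re := by
    exact_mod_cast (Complex.le_def.mp e1).1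
  have r2 : 0 ≤ (1 + dotProduct (star x) (B *ᵥ x)).re := by
    exact_mod_cast (Complex.le_def.mp e2).1
  simp only [Complex.sub_re, Complex.add_re, Complex.one_re] at r1 r2
  rw [abs_le]
  constructor <;> linarith

lemma re_trace_mul_le {d : ℕ} {M B : Matrix (Fin d) (Fin d) ℂ} (hM : M.IsHermitian)
    (h1 : (1 - B).PosSemidef) (h2 : (1 + B).PosSemidef) :
    ((M * B).trace).re ≤ traceNorm M := by
  rw [traceNorm_eq_sum_abs hM]
  set U : Matrix (Fin d) (Fin d) ℂ := (hM.eigenvectorUnitary : Matrix (Fin d) (Fin d) ℂ) with hUdef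
  have hU2 : star U * U = 1 := Matrix.mem_unitaryGroup_iff'.mp hM.eigenvectorUnitary.2
  set e : Fin d → ℝ := hM.eigenvalues with he
  set N : Matrix (Fin d) (Fin d) ℂ := star U * B * U with hN
  have htr : (M * B).trace = ∑ i, (e i : ℂ) * N i i := by
    conv_lhs => rw [hM.spectral_theorem, Unitary.conjStarAlgAut_apply, ← hUdef]
    have h3 : U * diagonal (RCLike.ofReal ∘ hM.eigenvalues) * star U * B
        = U * (diagonal (RCLike.ofReal ∘ hM.eigenvalues) * (star U * B)) := by
      simp only [Matrix.mul_assoc]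
    rw [h3, Matrix.trace_mul_comm, Matrix.mul_assoc, Matrix.mul_assoc, ← Matrix.mul_assoc (star U)]
    rw [← hN, Matrix.trace]
    simp only [Matrix.diag_apply, Matrix.mul_apply, diagonal_apply, Function.comp_apply]
    refine Finset.sum_congr rfl fun i _ => ?_
    rw [Finset.sum_eq_single i]
    · simp [← he]
    · intro b _ hb; simp [Ne.symm hb]
    · intro h; exact absurd (Finset.mem_univ i) h
  rw [htr]
  have hNbound : ∀ i, |(N i i).re| ≤ 1 := by
    intro i
    set x : Fin d → ℂ := fun j => U j i with hx
    have hxx : dotProduct (star x) x = 1 := by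
      have := congrFun (congrFun hU2 i) i
      simp only [Matrix.mul_apply, Matrix.one_apply_eq, Matrix.star_apply] at this
      simpa [dotProduct, hx, Matrix.star_eq_conjTranspose, Matrix.conjTranspose_apply]
        using this
    have hNii : N i i = dotProduct (star x) (B *ᵥ x) := by
      rw [hN]
      simp only [Matrix.mul_apply, dotProduct, Matrix.mulVec, Matrix.star_apply,
        Matrix.star_eq_conjTranspose, Matrix.conjTranspose_apply, Pi.star_apply, hx,
        dotProduct]
      simp only [Finset.sum_mul, Finset.mul_sum]
      rw [Finset.sum_comm]
      exact Finset.sum_congr rfl fun k _ => Finset.sum_congr rfl fun j _ => by ring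
    rw [hNii]
    exact diag_entry_bound h1 h2 x hxx
  rw [Complex.re_sum]
  calc ∑ i, ((e i : ℂ) * N i i).re ≤ ∑ i, |e i| := by
        refine Finset.sum_le_sum fun i _ => ?_
        rw [show ((e i : ℂ) * N i i).re = e i * (N i i).re by
          simp [Complex.mul_re, Complex.ofReal_re, Complex.ofReal_im]]
        calc e i * (N i i).re ≤ |e i * (N i i).re| := le_abs_self _
          _ = |e i| * |(N i i).re| := abs_mul _ _
          _ ≤ |e i| * 1 := by
              exact mul_le_mul_of_nonneg_left (hNbound i) (abs_nonneg _)
          _ = |e i| := mul_one _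
    _ = ∑ i, |e i| := rfl

section Pfacts
variable {d : ℕ}

lemma P_apply (i j : Fin d) :
    Matrix.vecMulVec (phi d) (star (phi d)) i j = (((d : ℝ)⁻¹ : ℝ) : ℂ) := by
  rw [Matrix.vecMulVec_apply]
  simp only [phi, Pi.star_apply, star_inv₀, Complex.star_def, Complex.conj_ofReal]
  rw [← mul_inv, ← Complex.ofReal_mul, Real.mul_self_sqrt (Nat.cast_nonneg d)]
  push_cast
  rfl

lemma P_herm : (Matrix.vecMulVec (phi d) (star (phi d))).IsHermitian := by
  ext i j
  simp [Matrix.conjTranspose_apply, P_apply, Complex.star_def, Complex.conj_ofReal]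

variable (hd0 : 0 < d)
include hd0

lemma P_mul_P : Matrix.vecMulVec (phi d) (star (phi d)) * Matrix.vecMulVec (phi d) (star (phi d))
    = Matrix.vecMulVec (phi d) (star (phi d)) := by
  ext i j
  simp only [Matrix.mul_apply, P_apply]
  rw [Finset.sum_const, Finset.card_univ, Fintype.card_fin, nsmul_eq_mul]
  have hdne : ((d : ℕ) : ℂ) ≠ 0 := by
    simp only [ne_eq, Nat.cast_eq_zero]
    omega
  push_cast
  field_simp

lemma P_trace : (Matrix.vecMulVec (phi d) (star (phi d))).trace = 1 := by
  rw [Matrix.trace]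
  simp only [Matrix.diag_apply, P_apply]
  rw [Finset.sum_const, Finset.card_univ, Fintype.card_fin, nsmul_eq_mul]
  have hdne : (d : ℝ) ≠ 0 := by positivity
  push_cast
  field_simp

lemma P_psd : (Matrix.vecMulVec (phi d) (star (phi d))).PosSemidef := by
  have h := Matrix.posSemidef_conjTranspose_mul_self
    (Matrix.vecMulVec (phi d) (star (phi d)))
  rwa [(P_herm (d := d)).eq, P_mul_P hd0] at h

lemma one_sub_P_psd : ((1 : Matrix (Fin d) (Fin d) ℂ)
    - Matrix.vecMulVec (phi d) (star (phi d))).PosSemidef := by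
  set P := Matrix.vecMulVec (phi d) (star (phi d)) with hP
  have hH : (1 - P)ᴴ = 1 - P := by
    rw [Matrix.conjTranspose_sub, Matrix.conjTranspose_one, (P_herm (d := d)).eq]
  have hsq : (1 - P) * (1 - P) = 1 - P := by
    rw [sub_mul, one_mul, mul_sub, mul_one, hP, P_mul_P hd0]
    abel
  have h := Matrix.posSemidef_conjTranspose_mul_self ((1 : Matrix (Fin d) (Fin d) ℂ) - P)
  rwa [hH, hsq] at h

end Pfacts

section TraceFacts
variable {d : ℕ} (hd0 : 0 < d) (p l : ℝ) {δ : Matrix (Fin d) (Fin d) ℂ}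

lemma trace_delta_P (hδd : δ.IsDiag) (hδt : δ.trace = 1) :
    (δ * Matrix.vecMulVec (phi d) (star (phi d))).trace = (((d : ℝ)⁻¹ : ℝ) : ℂ) := by
  rw [Matrix.trace]
  simp only [Matrix.diag_apply, Matrix.mul_apply, P_apply]
  have h1 : ∀ i : Fin d, ∑ j, δ i j * (((d : ℝ)⁻¹ : ℝ) : ℂ)
      = δ i i * (((d : ℝ)⁻¹ : ℝ) : ℂ) := by
    intro i
    rw [Finset.sum_eq_single i]
    · intro b _ hb
      rw [hδd (Ne.symm hb), zero_mul]
    · intro h; exact absurd (Finset.mem_univ i) h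
  rw [Finset.sum_congr rfl fun i _ => h1 i, ← Finset.sum_mul]
  have : ∑ i, δ i i = δ.trace := rfl
  rw [this, hδt, one_mul]

lemma mcms_mul_P (hd0 : 0 < d) :
    mcms d p * Matrix.vecMulVec (phi d) (star (phi d))
      = (p + (1 - p) / d : ℝ) • Matrix.vecMulVec (phi d) (star (phi d)) := by
  rw [mcms, add_mul, Matrix.smul_mul, Matrix.smul_mul, P_mul_P hd0, one_mul, ← add_smul]

lemma mcms_trace (hd0 : 0 < d) : (mcms d p).trace = 1 := by
  rw [mcms, Matrix.trace_add, Matrix.trace_smul, Matrix.trace_smul, P_trace hd0,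
    Matrix.trace_one, Fintype.card_fin, Complex.real_smul, Complex.real_smul]
  push_cast
  have hdne : ((d : ℕ) : ℂ) ≠ 0 := by
    simp only [ne_eq, Nat.cast_eq_zero]; omega
  field_simp
  ring

end TraceFacts

lemma traceNorm_of_psd {d : ℕ} {A : Matrix (Fin d) (Fin d) ℂ} (hA : A.PosSemidef) :
    traceNorm A = A.trace.re := by
  exact traceNorm_eq_of_sq hA (by rw [hA.1.eq])

lemma smul_psd {d : ℕ} {A : Matrix (Fin d) (Fin d) ℂ} (r : ℝ) (hr : 0 ≤ r)
    (hA : A.PosSemidef) : (r • A).PosSemidef := by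
  apply Matrix.PosSemidef.of_dotProduct_mulVec_nonneg
  · rw [Matrix.IsHermitian, Matrix.conjTranspose_smul, star_trivial, hA.1.eq]
  · intro x
    rw [Matrix.smul_mulVec, dotProduct_smul, Complex.real_smul]
    exact mul_nonneg (by exact_mod_cast hr) (hA.dotProduct_mulVec_nonneg x)

section Herm
variable {d : ℕ} {δ : Matrix (Fin d) (Fin d) ℂ}

lemma M_herm (p l : ℝ) (hδ : δ.IsHermitian) :
    (mcms d p - l • δ).IsHermitian := by
  rw [Matrix.IsHermitian, mcms]
  simp only [Matrix.conjTranspose_sub, Matrix.conjTranspose_add, Matrix.conjTranspose_smul,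
    Matrix.conjTranspose_one, star_trivial, hδ.eq, (P_herm (d := d)).eq]

end Herm

/-- The modified trace distance measure of coherence of the maximally coherent
mixed state `ρ_m = p|φ_d⟩⟨φ_d| + ((1−p)/d) I_d` equals `p`. -/
theorem modified_trace_coherence_mcms {d : ℕ} (hd : 2 ≤ d) (p : ℝ)
    (hp0 : 0 < p) (hp1 : p ≤ 1) :
    sInf {x : ℝ | ∃ (l : ℝ) (δ : Matrix (Fin d) (Fin d) ℂ),
        0 ≤ l ∧ δ.PosSemidef ∧ δ.trace = 1 ∧ δ.IsDiag ∧
        x = traceNorm (mcms d p - l • δ)} = p := by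
  have hd0 : 0 < d := by omega
  have hdR : (0 : ℝ) < d := by exact_mod_cast hd0
  have hdne : ((d : ℕ) : ℂ) ≠ 0 := by simp only [ne_eq, Nat.cast_eq_zero]; omega
  set P : Matrix (Fin d) (Fin d) ℂ := Matrix.vecMulVec (phi d) (star (phi d)) with hPdef
  -- membership
  have hmem : p ∈ {x : ℝ | ∃ (l : ℝ) (δ : Matrix (Fin d) (Fin d) ℂ),
      0 ≤ l ∧ δ.PosSemidef ∧ δ.trace = 1 ∧ δ.IsDiag ∧
      x = traceNorm (mcms d p - l • δ)} := by
    refine ⟨1 - p, ((d : ℝ)⁻¹ : ℝ) • (1 : Matrix (Fin d) (Fin d) ℂ), by linarith, ?_, ?_, ?_, ?_⟩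
    · exact smul_psd _ (by positivity) Matrix.PosSemidef.one
    · rw [Matrix.trace_smul, Matrix.trace_one, Fintype.card_fin, Complex.real_smul]
      push_cast
      field_simp
    · exact Matrix.isDiag_one.smul _
    · have heq : mcms d p - (1 - p) • (((d : ℝ)⁻¹ : ℝ) • (1 : Matrix (Fin d) (Fin d) ℂ))
          = p • P := by
        rw [mcms, smul_smul]
        have : ((1 - p) * (d : ℝ)⁻¹) = ((1 - p) / d : ℝ) := by ring
        rw [this, add_sub_cancel_right]
      rw [heq, traceNorm_of_psd (smul_psd _ hp0.le (P_psd hd0)),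
        Matrix.trace_smul, P_trace hd0, Complex.real_smul, mul_one]
      norm_num
  -- lower bound
  have hlb : ∀ x ∈ {x : ℝ | ∃ (l : ℝ) (δ : Matrix (Fin d) (Fin d) ℂ),
      0 ≤ l ∧ δ.PosSemidef ∧ δ.trace = 1 ∧ δ.IsDiag ∧
      x = traceNorm (mcms d p - l • δ)}, p ≤ x := by
    rintro x ⟨l, δ, hl0, hδpsd, hδtr, hδdiag, rfl⟩
    set M : Matrix (Fin d) (Fin d) ℂ := mcms d p - l • δ with hM
    have hMH : M.IsHermitian := M_herm p l hδpsd.1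
    have t1 : ((M * P).trace).re = p + (1 - p) / d - l / d := by
      rw [hM, sub_mul, Matrix.smul_mul, Matrix.trace_sub, Matrix.trace_smul,
        mcms_mul_P p hd0, Matrix.trace_smul, P_trace hd0, trace_delta_P hδdiag hδtr,
        Complex.real_smul, Complex.real_smul, mul_one]
      simp only [Complex.sub_re, Complex.ofReal_re, Complex.mul_re, Complex.ofReal_im,
        Complex.ofReal_re]
      push_cast
      ring_nf
    have t2 : (M.trace).re = 1 - l := by
      rw [hM, Matrix.trace_sub, Matrix.trace_smul, mcms_trace p hd0, hδtr,
        Complex.real_smul, mul_one]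
      simp
    by_cases hl : l ≤ 1 - p
    · have hb := re_trace_mul_le hMH (one_sub_P_psd hd0)
        (Matrix.PosSemidef.one.add (P_psd hd0))
      rw [t1] at hb
      rw [show traceNorm M = traceNorm M from rfl] at hb
      have h0 : 0 ≤ (1 - p - l) / (d : ℝ) := div_nonneg (by linarith) hdR.le
      have hsplit : p + (1 - p) / d - l / d = p + (1 - p - l) / d := by ring
      linarith [hb, hsplit ▸ hb]
    · push_neg at hl
      set B : Matrix (Fin d) (Fin d) ℂ := P + P - 1 with hB
      have h1B : ((1 : Matrix (Fin d) (Fin d) ℂ) - B).PosSemidef := by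
        have : (1 : Matrix (Fin d) (Fin d) ℂ) - B = (1 - P) + (1 - P) := by
          rw [hB]; abel
        rw [this]
        exact (one_sub_P_psd hd0).add (one_sub_P_psd hd0)
      have h2B : ((1 : Matrix (Fin d) (Fin d) ℂ) + B).PosSemidef := by
        have : (1 : Matrix (Fin d) (Fin d) ℂ) + B = P + P := by rw [hB]; abel
        rw [this]
        exact (P_psd hd0).add (P_psd hd0)
      have hb := re_trace_mul_le hMH h1B h2B
      have htrB : ((M * B).trace).re = 2 * ((M * P).trace).re - (M.trace).re := by
        rw [hB, mul_sub, mul_add, mul_one, Matrix.trace_sub, Matrix.trace_add]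
        simp only [Complex.sub_re, Complex.add_re]
        ring
      rw [htrB, t1, t2] at hb
      -- hb : 2 * (p + (1-p)/d - l/d) - (1 - l) ≤ traceNorm M
      set a : ℝ := 1 - p - l with ha
      have haneg : a ≤ 0 := by rw [ha]; linarith
      have h2d : (2 : ℝ) ≤ d := by exact_mod_cast hd
      have hq : a / (d : ℝ) * (d : ℝ) = a := div_mul_cancel₀ a (ne_of_gt hdR)
      have hprod : a / (d : ℝ) * ((d : ℝ) - 2) ≤ 0 :=
        mul_nonpos_of_nonpos_of_nonneg (div_nonpos_of_nonpos_of_nonneg haneg hdR.le)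
          (by linarith)
      have key : a ≤ 2 * (a / d) := by nlinarith [hprod, hq]
      have hsplit : 2 * (p + (1 - p) / d - l / d) - (1 - l)
          = p + (2 * (a / d) - a) := by rw [ha]; ring
      rw [hsplit] at hb
      have : p ≤ p + (2 * (a / d) - a) := by linarith
      exact le_trans this hb
  exact le_antisymm (csInf_le ⟨p, hlb⟩ hmem) (le_csInf ⟨p, hmem⟩ hlb)
end

section
/- Let d ≥ 2, 0 < p ≤ 1, and let ρ_m = p|φ_d⟩⟨φ_d| + ((1−p)/d) I_d, where |φ_d⟩ = (1/√d) Σ_{i=0}^{d−1} |i⟩. Then the modified trace distance coherence and the trace-norm mixedness satisfy the complementarity relation C'_tr(ρ_m) + M_tr(ρ_m) = 1. -/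
open Matrix
open scoped ComplexOrder

namespace Aux

variable {d : ℕ}

open scoped MatrixOrder in
lemma traceNorm_eq_of_sq (A S : Matrix (Fin d) (Fin d) ℂ) (hS : S.PosSemidef)
    (h : S * S = Aᴴ * A) : traceNorm A = S.trace.re := by
  have hH := (Matrix.posSemidef_conjTranspose_mul_self A).1
  have h1 : CFC.sqrt (Aᴴ * A) = S := CFC.sqrt_unique h hS.nonneg
  rw [CFC.sqrt_eq_real_sqrt _ (Matrix.posSemidef_conjTranspose_mul_self A).nonneg,
    cfcₙ_eq_cfc (hf0 := Real.sqrt_zero), hH.cfc_eq] at h1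
  rw [traceNorm, ← h1]
  rfl

lemma traceNorm_hermitian {A : Matrix (Fin d) (Fin d) ℂ} (hA : A.IsHermitian) :
    traceNorm A = ∑ i, |hA.eigenvalues i| := by
  set U : Matrix (Fin d) (Fin d) ℂ := (Matrix.IsHermitian.eigenvectorUnitary hA : Matrix (Fin d) (Fin d) ℂ) with hU
  have hUU : star U * U = 1 := Unitary.coe_star_mul_self _
  have hUU' : U * star U = 1 := Unitary.coe_mul_star_self _
  set S := U * diagonal (fun i => (Complex.ofReal |hA.eigenvalues i|)) * star U with hSdef
  have hS : S.PosSemidef := by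
    apply Matrix.PosSemidef.mul_mul_conjTranspose_same ?_ U
    refine Matrix.posSemidef_diagonal_iff.mpr fun i => ?_
    exact_mod_cast Complex.zero_le_real.mpr (abs_nonneg _)
  have conj_mul : ∀ f g : Fin d → ℂ, (U * diagonal f * star U) * (U * diagonal g * star U)
      = U * diagonal (fun i => f i * g i) * star U := by
    intro f g
    calc (U * diagonal f * star U) * (U * diagonal g * star U)
        = U * (diagonal f * (star U * U) * diagonal g) * star U := by
          simp only [Matrix.mul_assoc]
      _ = U * diagonal (fun i => f i * g i) * star U := by
          rw [hUU, Matrix.mul_one, diagonal_mul_diagonal, Matrix.mul_assoc]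
  have hAspec : A = U * diagonal (fun i => (Complex.ofReal (hA.eigenvalues i))) * star U := by
    conv_lhs => rw [hA.spectral_theorem]
    rfl
  have hsq : S * S = Aᴴ * A := by
    rw [hA.eq, hSdef, conj_mul]
    conv_rhs => rw [hAspec, conj_mul]
    congr 2
    funext i
    simp only [← Complex.ofReal_mul, abs_mul_abs_self]
  rw [traceNorm_eq_of_sq A S hS hsq, hSdef]
  rw [Matrix.trace_mul_cycle, hUU, Matrix.one_mul, Matrix.trace_diagonal]
  simp [Complex.ofReal_re]


lemma quad_form_eq (B U : Matrix (Fin d) (Fin d) ℂ) (i : Fin d) :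
    (star U * B * U) i i = star (fun k => U k i) ⬝ᵥ B.mulVec (fun k => U k i) := by
  rw [Matrix.mul_assoc]
  simp [Matrix.mul_apply, Matrix.mulVec, dotProduct, Matrix.star_apply]

lemma re_trace_mul_le {A : Matrix (Fin d) (Fin d) ℂ} (B : Matrix (Fin d) (Fin d) ℂ)
    (hA : A.IsHermitian)
    (hB : ∀ v : Fin d → ℂ, |(star v ⬝ᵥ B.mulVec v).re| ≤ (star v ⬝ᵥ v).re) :
    (trace (B * A)).re ≤ traceNorm A := by
  rw [traceNorm_hermitian hA]
  set U : Matrix (Fin d) (Fin d) ℂ := (Matrix.IsHermitian.eigenvectorUnitary hA : Matrix (Fin d) (Fin d) ℂ) with hU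
  have hUU : star U * U = 1 := Unitary.coe_star_mul_self _
  have hAspec : A = U * diagonal (fun i => (Complex.ofReal (hA.eigenvalues i))) * star U := by
    conv_lhs => rw [hA.spectral_theorem]
    rfl
  have h1 : trace (B * A) = trace ((star U * B * U) * diagonal (fun i => (Complex.ofReal (hA.eigenvalues i)))) := by
    conv_lhs => rw [hAspec]
    rw [show B * (U * diagonal (fun i => (Complex.ofReal (hA.eigenvalues i))) * star U)
        = (B * U * diagonal (fun i => (Complex.ofReal (hA.eigenvalues i)))) * star U by
      simp only [Matrix.mul_assoc]]
    rw [Matrix.trace_mul_comm]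
    simp only [Matrix.mul_assoc]
  rw [h1, Matrix.trace]
  have h2 : ∀ i : Fin d, ((star U * B * U * diagonal (fun i => (Complex.ofReal (hA.eigenvalues i)))).diag i).re
      ≤ |hA.eigenvalues i| := by
    intro i
    rw [Matrix.diag_apply, Matrix.mul_diagonal]
    rw [Complex.mul_re]
    simp only [Complex.ofReal_re, Complex.ofReal_im, mul_zero, sub_zero]
    have hv := hB (fun k => U k i)
    have hvv : (star (fun k => U k i) ⬝ᵥ (fun k => U k i)) = 1 := by
      have h3 : (star (fun k => U k i) ⬝ᵥ (fun k => U k i)) = (star U * U) i i := by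
        simp [Matrix.mul_apply, dotProduct, Matrix.star_apply]
      rw [h3, hUU]; simp
    rw [quad_form_eq]
    have hre : |(star (fun k => U k i) ⬝ᵥ B.mulVec (fun k => U k i)).re| ≤ 1 := by
      refine hv.trans ?_
      rw [hvv]; simp
    calc (star (fun k => U k i) ⬝ᵥ B.mulVec (fun k => U k i)).re * hA.eigenvalues i
        ≤ |(star (fun k => U k i) ⬝ᵥ B.mulVec (fun k => U k i)).re * hA.eigenvalues i| := le_abs_self _
      _ = |(star (fun k => U k i) ⬝ᵥ B.mulVec (fun k => U k i)).re| * |hA.eigenvalues i| := abs_mul _ _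
      _ ≤ 1 * |hA.eigenvalues i| := by
          exact mul_le_mul_of_nonneg_right hre (abs_nonneg _)
      _ = |hA.eigenvalues i| := one_mul _
  calc (∑ i, (star U * B * U * diagonal (fun i => (Complex.ofReal (hA.eigenvalues i)))).diag i).re
      = ∑ i, ((star U * B * U * diagonal (fun i => (Complex.ofReal (hA.eigenvalues i)))).diag i).re := by
        rw [Complex.re_sum]
    _ ≤ ∑ i, |hA.eigenvalues i| := Finset.sum_le_sum (fun i _ => h2 i)

/-- Cauchy–Schwarz for the all-ones vector. -/
lemma cs_sum (v : Fin d → ℂ) :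
    Complex.normSq (∑ i, v i) ≤ d * ∑ i, Complex.normSq (v i) := by
  have h1 : ‖∑ i, v i‖ ≤ ∑ i, ‖v i‖ := by
    simpa using norm_sum_le Finset.univ v
  have h2 : (∑ i, ‖v i‖)^2 ≤ (d : ℝ) * ∑ i, (‖v i‖)^2 := by
    simpa using sq_sum_le_card_mul_sum_sq (s := (Finset.univ : Finset (Fin d)))
      (f := fun i => ‖v i‖)
  calc Complex.normSq (∑ i, v i) = (‖∑ i, v i‖)^2 := (Complex.sq_norm _).symm
    _ ≤ (∑ i, ‖v i‖)^2 := by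
        apply pow_le_pow_left₀ (norm_nonneg _) h1
    _ ≤ (d : ℝ) * ∑ i, (‖v i‖)^2 := h2
    _ = d * ∑ i, Complex.normSq (v i) := by
        congr 1; exact Finset.sum_congr rfl fun i _ => Complex.sq_norm _

/-- The constant matrix with entries `c`. -/
def constM (d : ℕ) (c : ℂ) : Matrix (Fin d) (Fin d) ℂ := Matrix.of fun _ _ => c

lemma constM_mul_constM (c c' : ℂ) : constM d c * constM d c' = constM d ((d : ℂ) * (c * c')) := by
  ext i j
  simp [constM, Matrix.mul_apply, Finset.sum_const, mul_comm]

lemma trace_constM (c : ℂ) : (constM d c).trace = (d : ℂ) * c := by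
  simp [constM, Matrix.trace, Matrix.diag, Finset.sum_const]

lemma constM_conjTranspose (c : ℂ) : (constM d c)ᴴ = constM d (star c) := by
  ext i j; simp [constM, Matrix.conjTranspose_apply]

lemma dot_star_self (v : Fin d → ℂ) : star v ⬝ᵥ v = ((∑ i, Complex.normSq (v i) : ℝ) : ℂ) := by
  simp only [dotProduct, Pi.star_apply]
  push_cast
  exact Finset.sum_congr rfl fun i _ => by
    rw [Complex.star_def, mul_comm, Complex.mul_conj]

lemma dot_constM (c : ℂ) (v : Fin d → ℂ) :
    star v ⬝ᵥ (constM d c) *ᵥ v = c * Complex.normSq (∑ i, v i) := by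
  simp only [constM, Matrix.mulVec, dotProduct, Pi.star_apply, Matrix.of_apply]
  calc ∑ k, star (v k) * ∑ l, c * v l
      = c * ((∑ l, v l) * ∑ k, star (v k)) := by
        rw [← Finset.sum_mul, ← Finset.mul_sum]; ring
    _ = c * Complex.normSq (∑ i, v i) := by
        rw [show (∑ k, star (v k)) = star (∑ k, v k) by simp, Complex.star_def,
          Complex.mul_conj]

lemma hB1 (hd0 : 0 < d) (v : Fin d → ℂ) :
    |(star v ⬝ᵥ (constM d ((d:ℂ)⁻¹)) *ᵥ v).re| ≤ (star v ⬝ᵥ v).re := by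
  rw [dot_constM, dot_star_self]
  have hcast : ((d:ℂ)⁻¹ * (Complex.normSq (∑ i, v i) : ℂ))
      = (((d:ℝ)⁻¹ * Complex.normSq (∑ i, v i) : ℝ) : ℂ) := by push_cast; ring
  rw [hcast, Complex.ofReal_re, Complex.ofReal_re]
  have hN : (0:ℝ) ≤ Complex.normSq (∑ i, v i) := Complex.normSq_nonneg _
  have hT : (0:ℝ) ≤ ∑ i, Complex.normSq (v i) :=
    Finset.sum_nonneg fun i _ => Complex.normSq_nonneg _
  have hcs := cs_sum v
  have hdpos : (0:ℝ) < d := by exact_mod_cast hd0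
  rw [abs_of_nonneg (by positivity)]
  rw [inv_mul_le_iff₀ hdpos]
  linarith

lemma hB2 (hd0 : 0 < d) (v : Fin d → ℂ) :
    |(star v ⬝ᵥ ((2:ℂ) • constM d ((d:ℂ)⁻¹) - 1) *ᵥ v).re| ≤ (star v ⬝ᵥ v).re := by
  rw [Matrix.sub_mulVec, dotProduct_sub, Matrix.smul_mulVec, dotProduct_smul,
    Matrix.one_mulVec, dot_constM, dot_star_self]
  have hcast : ((2:ℂ) • ((d:ℂ)⁻¹ * (Complex.normSq (∑ i, v i) : ℂ))
      - ((∑ i, Complex.normSq (v i) : ℝ) : ℂ))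
      = (((2 * ((d:ℝ)⁻¹ * Complex.normSq (∑ i, v i))
          - ∑ i, Complex.normSq (v i) : ℝ)) : ℂ) := by
    simp only [smul_eq_mul]; push_cast; ring
  rw [hcast, Complex.ofReal_re, Complex.ofReal_re]
  have hN : (0:ℝ) ≤ Complex.normSq (∑ i, v i) := Complex.normSq_nonneg _
  have hT : (0:ℝ) ≤ ∑ i, Complex.normSq (v i) :=
    Finset.sum_nonneg fun i _ => Complex.normSq_nonneg _
  have hcs := cs_sum v
  have hdpos : (0:ℝ) < d := by exact_mod_cast hd0
  have hkey : (d:ℝ)⁻¹ * Complex.normSq (∑ i, v i) ≤ ∑ i, Complex.normSq (v i) := by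
    rw [inv_mul_le_iff₀ hdpos]; linarith
  have h0 : (0:ℝ) ≤ (d:ℝ)⁻¹ * Complex.normSq (∑ i, v i) :=
    mul_nonneg (by positivity) hN
  rw [abs_le]
  constructor <;> linarith

lemma trace_constM_mul_diag (c : ℂ) (δ : Matrix (Fin d) (Fin d) ℂ) (hδ : δ.IsDiag) :
    (constM d c * δ).trace = c * δ.trace := by
  rw [Matrix.trace, Matrix.trace, Finset.mul_sum]
  refine Finset.sum_congr rfl fun i _ => ?_
  rw [Matrix.diag_apply, Matrix.mul_apply, Finset.sum_eq_single i]
  · simp [constM]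
  · intro k _ hk; rw [hδ hk, mul_zero]
  · simp

lemma mul_aux (hd0 : (d:ℂ) ≠ 0) (x y z w : ℂ) :
    ((x • constM d ((d:ℂ)⁻¹) + y • 1) * (z • constM d ((d:ℂ)⁻¹) + w • 1))
      = (x*z + x*w + y*z) • constM d ((d:ℂ)⁻¹) + (y*w) • 1 := by
  have hJJ : constM d ((d:ℂ)⁻¹) * constM d ((d:ℂ)⁻¹) = constM d ((d:ℂ)⁻¹) := by
    rw [constM_mul_constM]
    congr 1
    field_simp
  simp only [add_mul, mul_add, Matrix.smul_mul, Matrix.mul_smul, hJJ, Matrix.mul_one,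
    Matrix.one_mul, smul_smul, add_smul]
  module

lemma herm_aux (a b : ℝ) :
    ((a:ℂ) • constM d ((d:ℂ)⁻¹) + (b:ℂ) • 1).IsHermitian := by
  unfold Matrix.IsHermitian
  rw [Matrix.conjTranspose_add, Matrix.conjTranspose_smul, Matrix.conjTranspose_smul,
    constM_conjTranspose, Matrix.conjTranspose_one]
  congr 1 <;> [skip; congr 1] <;>
    simp [Complex.star_def, Complex.conj_ofReal, star_inv₀]

lemma psd_aux (a b : ℝ) (ha : 0 ≤ a) (hb : 0 ≤ b) :
    ((a:ℂ) • constM d ((d:ℂ)⁻¹) + (b:ℂ) • 1).PosSemidef := by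
  refine Matrix.PosSemidef.of_dotProduct_mulVec_nonneg (herm_aux a b) fun v => ?_
  rw [Matrix.add_mulVec, dotProduct_add, Matrix.smul_mulVec, Matrix.smul_mulVec,
    dotProduct_smul, dotProduct_smul, Matrix.one_mulVec, dot_constM, dot_star_self]
  have hcast : ((a:ℂ)) • ((d:ℂ)⁻¹ * (Complex.normSq (∑ i, v i) : ℂ))
      + ((b:ℂ)) • ((∑ i, Complex.normSq (v i) : ℝ) : ℂ)
      = (((a * ((d:ℝ)⁻¹ * Complex.normSq (∑ i, v i))
          + b * ∑ i, Complex.normSq (v i) : ℝ)) : ℂ) := by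
    simp only [smul_eq_mul]; push_cast; ring
  rw [hcast]
  rw [Complex.zero_le_real]
  have hN : (0:ℝ) ≤ Complex.normSq (∑ i, v i) := Complex.normSq_nonneg _
  have hT : (0:ℝ) ≤ ∑ i, Complex.normSq (v i) :=
    Finset.sum_nonneg fun i _ => Complex.normSq_nonneg _
  positivity

lemma trace_aux (hd0 : (d:ℂ) ≠ 0) (x y : ℂ) :
    (x • constM d ((d:ℂ)⁻¹) + y • 1).trace = x + y * d := by
  rw [Matrix.trace_add, Matrix.trace_smul, Matrix.trace_smul, trace_constM,
    Matrix.trace_one]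
  simp only [smul_eq_mul, Finset.card_univ, Fintype.card_fin]
  field_simp

lemma realsmul (r : ℝ) (M : Matrix (Fin d) (Fin d) ℂ) : r • M = (r:ℂ) • M := by
  ext i j
  simp [Complex.real_smul]

lemma mcms_eq (hd0 : 0 < d) (p : ℝ) :
    mcms d p = (p:ℂ) • constM d ((d:ℂ)⁻¹) + (((1-p)/d : ℝ) : ℂ) • 1 := by
  have hsq : ((Real.sqrt d : ℂ))⁻¹ * ((Real.sqrt d : ℂ))⁻¹ = (d:ℂ)⁻¹ := by
    rw [← mul_inv]
    norm_cast
    rw [Real.mul_self_sqrt (by positivity)]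
    norm_num
  unfold mcms phi
  rw [realsmul, realsmul]
  congr 1
  ext i j
  simp only [Matrix.smul_apply, Matrix.vecMulVec_apply, Pi.star_apply, constM, Matrix.of_apply]
  congr 1
  rw [show star ((Real.sqrt d : ℂ))⁻¹ = ((Real.sqrt d : ℂ))⁻¹ by
    rw [star_inv₀]; congr 1; exact Complex.conj_ofReal _]
  exact hsq

lemma JJ (hd0 : (d:ℂ) ≠ 0) : constM d ((d:ℂ)⁻¹) * constM d ((d:ℂ)⁻¹) = constM d ((d:ℂ)⁻¹) := by
  rw [constM_mul_constM]
  congr 1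
  field_simp

lemma trace_J (hd0 : (d:ℂ) ≠ 0) : (constM d ((d:ℂ)⁻¹)).trace = 1 := by
  rw [trace_constM]
  field_simp

end Aux

/-- Complementarity between coherence and mixedness for the maximally coherent
mixed state: `C'_tr(ρ_m) + M_tr(ρ_m) = 1`. -/
theorem coherence_add_mixedness_mcms {d : ℕ} (hd : 2 ≤ d) (p : ℝ)
    (hp0 : 0 < p) (hp1 : p ≤ 1) :
    sInf {x : ℝ | ∃ (l : ℝ) (δ : Matrix (Fin d) (Fin d) ℂ),
        0 ≤ l ∧ δ.PosSemidef ∧ δ.trace = 1 ∧ δ.IsDiag ∧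
        x = traceNorm (mcms d p - l • δ)}
      + (1 - ((d : ℝ) / (2 * ((d : ℝ) - 1)))
          * traceNorm (mcms d p - ((d : ℝ)⁻¹) • 1)) = 1 := by
  have hd0 : 0 < d := lt_of_lt_of_le two_pos hd
  have hdR : (0:ℝ) < d := by exact_mod_cast hd0
  have hd2 : (2:ℝ) ≤ d := by exact_mod_cast hd
  have hdC : (d:ℂ) ≠ 0 := Nat.cast_ne_zero.mpr hd0.ne'
  set J : Matrix (Fin d) (Fin d) ℂ := Aux.constM d ((d:ℂ)⁻¹) with hJ
  -- Mixedness part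
  have hmix : traceNorm (mcms d p - ((d : ℝ)⁻¹) • 1) = 2*p*((d:ℝ)-1)/d := by
    have hA2 : mcms d p - ((d : ℝ)⁻¹) • 1
        = (p:ℂ) • J + ((-(p/d) : ℝ) : ℂ) • 1 := by
      rw [Aux.mcms_eq hd0, Aux.realsmul, add_sub_assoc, ← sub_smul]
      congr 1
      push_cast
      congr 1; ring
    set S2 : Matrix (Fin d) (Fin d) ℂ :=
      ((p*(1-2/(d:ℝ)) : ℝ) : ℂ) • J + ((p/d : ℝ) : ℂ) • 1 with hS2
    have hS2psd : S2.PosSemidef := by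
      apply Aux.psd_aux
      · have : 2/(d:ℝ) ≤ 1 := by rw [div_le_one hdR]; exact hd2
        nlinarith
      · positivity
    have hsq : S2 * S2 = (mcms d p - ((d : ℝ)⁻¹) • 1)ᴴ * (mcms d p - ((d : ℝ)⁻¹) • 1) := by
      have e1 : ((p*(1-2/(d:ℝ)) : ℝ) : ℂ) * ((p*(1-2/(d:ℝ)) : ℝ) : ℂ)
          + ((p*(1-2/(d:ℝ)) : ℝ) : ℂ) * ((p/d : ℝ) : ℂ)
          + ((p/d : ℝ) : ℂ) * ((p*(1-2/(d:ℝ)) : ℝ) : ℂ)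
          = (p:ℂ) * (p:ℂ) + (p:ℂ) * ((-(p/d) : ℝ) : ℂ)
            + ((-(p/d) : ℝ) : ℂ) * (p:ℂ) := by
        push_cast
        field_simp
        ring
      have e2 : ((p/d : ℝ) : ℂ) * ((p/d : ℝ) : ℂ)
          = ((-(p/d) : ℝ) : ℂ) * ((-(p/d) : ℝ) : ℂ) := by
        push_cast
        ring
      rw [hA2, (Aux.herm_aux p (-(p/d))).eq, hS2, Aux.mul_aux hdC, Aux.mul_aux hdC, e1, e2]
    rw [Aux.traceNorm_eq_of_sq _ S2 hS2psd hsq, hS2, Aux.trace_aux hdC]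
    have : ((p*(1-2/(d:ℝ)) : ℝ) : ℂ) + ((p/d : ℝ) : ℂ) * d
        = ((2*p*((d:ℝ)-1)/d : ℝ) : ℂ) := by
      push_cast
      field_simp
      ring
    rw [this, Complex.ofReal_re]
  -- Coherence part
  set Sset := {x : ℝ | ∃ (l : ℝ) (δ : Matrix (Fin d) (Fin d) ℂ),
      0 ≤ l ∧ δ.PosSemidef ∧ δ.trace = 1 ∧ δ.IsDiag ∧
      x = traceNorm (mcms d p - l • δ)} with hSset
  have hmemb : p ∈ Sset := by
    refine ⟨1-p, (((d:ℝ)⁻¹ : ℝ) : ℂ) • 1, by linarith, ?_, ?_, ?_, ?_⟩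
    · have := Aux.psd_aux (d := d) 0 (d:ℝ)⁻¹ le_rfl (by positivity)
      simpa using this
    · rw [Matrix.trace_smul, Matrix.trace_one]
      simp only [smul_eq_mul, Finset.card_univ, Fintype.card_fin]
      push_cast
      field_simp
    · intro i j hij
      simp [Matrix.one_apply_ne hij]
    · have hA1 : mcms d p - (1-p) • ((((d:ℝ)⁻¹ : ℝ) : ℂ) • 1)
          = (p:ℂ) • J + ((0 : ℝ) : ℂ) • 1 := by
        rw [Aux.mcms_eq hd0, Aux.realsmul, smul_smul, add_sub_assoc, ← sub_smul]
        congr 1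
        push_cast
        congr 1; ring
      have hpsd1 : ((p:ℂ) • J + ((0 : ℝ) : ℂ) • 1).PosSemidef :=
        Aux.psd_aux p 0 hp0.le le_rfl
      have hsq1 : ((p:ℂ) • J + ((0 : ℝ) : ℂ) • 1) * ((p:ℂ) • J + ((0 : ℝ) : ℂ) • 1)
          = (mcms d p - (1-p) • ((((d:ℝ)⁻¹ : ℝ) : ℂ) • 1))ᴴ
            * (mcms d p - (1-p) • ((((d:ℝ)⁻¹ : ℝ) : ℂ) • 1)) := by
        rw [hA1, (Aux.herm_aux p 0).eq]
      rw [Aux.traceNorm_eq_of_sq _ _ hpsd1 hsq1, Aux.trace_aux hdC]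
      simp
  have hlb : ∀ x ∈ Sset, p ≤ x := by
    rintro x ⟨l, δ, hl, hδpsd, hδtr, hδdiag, hx⟩
    have hAeq : mcms d p - l • δ
        = (p:ℂ) • J + (((1-p)/d : ℝ) : ℂ) • 1 - (l:ℂ) • δ := by
      rw [Aux.mcms_eq hd0, Aux.realsmul]
    have hδherm : ((l:ℂ) • δ)ᴴ = (l:ℂ) • δ := by
      rw [Matrix.conjTranspose_smul, hδpsd.1.eq]
      congr 1
      exact Complex.conj_ofReal l
    have hAherm : (mcms d p - l • δ).IsHermitian := by
      show _ᴴ = _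
      rw [hAeq, Matrix.conjTranspose_sub, hδherm, (Aux.herm_aux p ((1-p)/d)).eq]
    have ht1 : (J * (mcms d p - l • δ)).trace = ((p + (1-p)/d - l/d : ℝ) : ℂ) := by
      rw [hAeq, Matrix.mul_sub, Matrix.mul_add, Matrix.trace_sub, Matrix.trace_add,
        Matrix.mul_smul, Matrix.mul_smul, Matrix.mul_smul, Matrix.trace_smul,
        Matrix.trace_smul, Matrix.trace_smul, Matrix.mul_one, Aux.JJ hdC,
        Aux.trace_J hdC, Aux.trace_constM_mul_diag _ δ hδdiag, hδtr]
      push_cast [smul_eq_mul]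
      field_simp
      try ring
    have ht2 : (mcms d p - l • δ).trace = ((1 - l : ℝ) : ℂ) := by
      rw [hAeq, sub_eq_add_neg, Matrix.trace_add, Matrix.trace_neg, Matrix.trace_smul,
        Aux.trace_aux hdC, hδtr]
      push_cast
      field_simp
      ring
    rcases le_or_gt l (1-p) with hcase | hcase
    · have hb := Aux.re_trace_mul_le (A := mcms d p - l • δ) J hAherm (Aux.hB1 hd0)
      rw [ht1, Complex.ofReal_re] at hb
      rw [hx]
      have hdiv : l/(d:ℝ) ≤ (1-p)/d := by gcongr
      linarith
    · have hb := Aux.re_trace_mul_le (A := mcms d p - l • δ) ((2:ℂ) • J - 1) hAherm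
        (Aux.hB2 hd0)
      have ht3 : (((2:ℂ) • J - 1) * (mcms d p - l • δ)).trace
          = ((2*(p + (1-p)/d - l/d) - (1 - l) : ℝ) : ℂ) := by
        rw [Matrix.sub_mul, Matrix.smul_mul, Matrix.trace_sub, Matrix.trace_smul,
          Matrix.one_mul, ht1, ht2]
        push_cast [smul_eq_mul]
        ring
      rw [ht3, Complex.ofReal_re] at hb
      rw [hx]
      have h2d : 2/(d:ℝ) ≤ 1 := by rw [div_le_one hdR]; exact hd2
      have hkey : 0 ≤ (l - (1-p)) * (1 - 2/(d:ℝ)) :=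
        mul_nonneg (by linarith) (by linarith)
      have hexp : 2*(p + (1-p)/(d:ℝ) - l/d) - (1 - l)
          = p + (l - (1-p)) * (1 - 2/(d:ℝ)) := by
        field_simp
        ring
      rw [hexp] at hb
      linarith
  have hsinf : sInf Sset = p :=
    le_antisymm (csInf_le ⟨p, hlb⟩ hmemb) (le_csInf ⟨p, hmemb⟩ hlb)
  rw [hsinf, hmix]
  have hne : (d:ℝ) - 1 ≠ 0 := by linarith
  field_simp
  ring
end
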